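/- A bijection σ : 𝒢 → 𝒢 is an automorphism of the Grassmann graph (𝒢, ∼), i.e. σ and σ⁻¹ preserve adjacency, if and only if σ is a collineation of the Grassmann space (𝒢, 𝔓), i.e. σ and σ⁻¹ map every pencil onto a pencil. -/

import Mathlib

/-- The Grassmannian `𝒢` of all subspaces `X ≤ V` with `X ≅ V/X`. -/
def Grass (K V : Type*) [DivisionRing K] [AddCommGroup V] [Module K V] :
    Set (Submodule K V) :=
  {X | Nonempty (X ≃ₗ[K] (V ⧸ X))}

variable {K V : Type*} [DivisionRing K] [AddCommGroup V] [Module K V]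

/-- The dimension of the quotient `E / M` (computed as the rank of `E ⧸ (M ∩ E)`). -/
noncomputable def quotRank (M E : Submodule K V) : Cardinal :=
  Module.rank K (E ⧸ (M.comap E.subtype))

/-- Two subspaces are adjacent if `dim (X/(X ⊓ Y)) = dim (Y/(X ⊓ Y)) = 1`. -/
def Adjacent (X Y : Submodule K V) : Prop :=
  quotRank (X ⊓ Y) X = 1 ∧ quotRank (X ⊓ Y) Y = 1

/-- Two subspaces are distant if they are complementary: `X ⊕ Y = V`. -/
def Distant (X Y : Submodule K V) : Prop := IsCompl X Y

/-- The star `𝒢[M⟩` with centre `M`. -/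
def starSet (M : Submodule K V) : Set (Submodule K V) :=
  {E | M ≤ E ∧ quotRank M E = 1}

/-- `M` is the centre of a star, i.e. there is `X ∈ 𝒢` with `M ≤ X`, `dim (X/M) = 1`. -/
def IsStarCentre (M : Submodule K V) : Prop :=
  ∃ X ∈ Grass K V, M ≤ X ∧ quotRank M X = 1

/-- The top `𝒢⟨N]` with carrier `N`. -/
def topSet (N : Submodule K V) : Set (Submodule K V) :=
  {E | E ≤ N ∧ quotRank E N = 1}

/-- `N` is the carrier of a top, i.e. there is `X ∈ 𝒢` with `X ≤ N`, `dim (N/X) = 1`. -/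
def IsTopCarrier (N : Submodule K V) : Prop :=
  ∃ X ∈ Grass K V, X ≤ N ∧ quotRank X N = 1

/-- An adjacency clique: a set of mutually adjacent elements of `𝒢`. -/
def IsAdjClique (A : Set (Submodule K V)) : Prop :=
  A ⊆ Grass K V ∧ A.Pairwise Adjacent

/-- A maximal adjacency clique. -/
def IsMaxAdjClique (A : Set (Submodule K V)) : Prop :=
  IsAdjClique A ∧ ∀ B, IsAdjClique B → A ⊆ B → A = B

/-- The pencil `𝒢[M,N] = {X ∈ 𝒢 | M < X < N}`. -/
def pencilSet (M N : Submodule K V) : Set (Submodule K V) :=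
  {X ∈ Grass K V | M < X ∧ X < N}

/-- `(M, N)` defines a pencil: there is `X ∈ 𝒢` with `M ≤ X ≤ N` and
`dim (X/M) = dim (N/X) = 1`. -/
def IsPencilPair (M N : Submodule K V) : Prop :=
  ∃ X ∈ Grass K V, M ≤ X ∧ X ≤ N ∧ quotRank M X = 1 ∧ quotRank X N = 1

/-- A pencil in `𝒢`. -/
def IsPencil (S : Set (Submodule K V)) : Prop :=
  ∃ M N : Submodule K V, IsPencilPair M N ∧ S = pencilSet M N

/-- A point is a one-dimensional subspace. -/
def IsPoint (p : Submodule K V) : Prop := Module.rank K p = 1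

/-- A line is a two-dimensional subspace. -/
def IsLine (L : Submodule K V) : Prop := Module.rank K L = 2

/-- Two subspaces meet if they have a common point, i.e. nonzero intersection. -/
def Meets (X Y : Submodule K V) : Prop := X ⊓ Y ≠ ⊥

/-- A distant clique: a set of mutually distant elements of `𝒢`. -/
def IsDistantClique (R : Set (Submodule K V)) : Prop :=
  R ⊆ Grass K V ∧ R.Pairwise Distant

/-- A set has at least three elements. -/
def HasThree (R : Set (Submodule K V)) : Prop :=
  ∃ A ∈ R, ∃ B ∈ R, ∃ C ∈ R, A ≠ B ∧ A ≠ C ∧ B ≠ C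

/-- Condition (R2): if a line meets three mutually distinct elements of `R`
then it meets all elements of `R`. -/
def MeetsThreeMeetsAll (R : Set (Submodule K V)) : Prop :=
  ∀ L : Submodule K V, IsLine L →
    ∀ E₀ ∈ R, ∀ E₁ ∈ R, ∀ E₂ ∈ R, E₀ ≠ E₁ → E₀ ≠ E₂ → E₁ ≠ E₂ →
      Meets L E₀ → Meets L E₁ → Meets L E₂ → ∀ E ∈ R, Meets L E

/-- A partial `Z`-regulus: conditions (R1) and (R2). -/
def IsPartialZRegulus (R : Set (Submodule K V)) : Prop :=
  (IsDistantClique R ∧ HasThree R) ∧ MeetsThreeMeetsAll R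

/-- A `Z`-regulus: a partial `Z`-regulus that is maximal, i.e. not properly
contained in any partial `Z`-regulus. -/
def IsZRegulus (R : Set (Submodule K V)) : Prop :=
  IsPartialZRegulus R ∧ ∀ S : Set (Submodule K V), IsPartialZRegulus S → R ⊆ S → R = S

/-- A directrix of `R`: a line meeting all elements of `R`. -/
def IsDirectrix (R : Set (Submodule K V)) (L : Submodule K V) : Prop :=
  IsLine L ∧ ∀ E ∈ R, Meets L E

/-- Condition (⊠2) from Theorem `Zreg`. -/
def BoxTwo (R : Set (Submodule K V)) : Prop :=
  ∀ E₀ ∈ R, ∀ E₁ ∈ R, ∀ E₂ ∈ R, E₀ ≠ E₁ → E₀ ≠ E₂ → E₁ ≠ E₂ →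
    ∀ W ∈ Grass K V, Adjacent W E₀ → ¬ Distant W E₁ → ¬ Distant W E₂ →
      ∀ E ∈ R, ¬ Distant W E

-- L1
theorem quotRank_eq_zero_iff {M E : Submodule K V} : quotRank M E = 0 ↔ E ≤ M := by
  rw [quotRank, rank_zero_iff, Submodule.Quotient.subsingleton_iff,
    Submodule.comap_subtype_eq_top]

-- second iso
theorem quotRank_inf_left (X Y : Submodule K V) :
    quotRank (X ⊓ Y) X = quotRank Y (X ⊔ Y) :=
  (LinearMap.quotientInfEquivSupQuotient X Y).rank_eq

theorem quotRank_comm (X Y : Submodule K V) :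
    quotRank (X ⊓ Y) Y = quotRank (Y ⊓ X) Y := by rw [inf_comm]

theorem Adjacent.symm {X Y : Submodule K V} (h : Adjacent X Y) : Adjacent Y X := by
  rw [Adjacent, inf_comm]; exact ⟨h.2, h.1⟩

open Submodule in
private lemma rank_map_mkQ {W : Type*} [AddCommGroup W] [Module K W]
    (p q : Submodule K W) :
    Module.rank K (q.map p.mkQ) = Module.rank K (q ⧸ p.comap q.subtype) := by
  let f := p.mkQ.comp q.subtype
  have hker : LinearMap.ker f = p.comap q.subtype := by
    simp [f, LinearMap.ker_comp, Submodule.ker_mkQ]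
  have hrange : LinearMap.range f = q.map p.mkQ := by
    rw [LinearMap.range_comp, Submodule.range_subtype]
  have := f.quotKerEquivRange.rank_eq
  rw [hker, hrange] at this
  exact this.symm

open Submodule in
private lemma quot_comap_rank_eq {W : Type*} [AddCommGroup W] [Module K W]
    (A B C : Submodule K W) (hBC : B ≤ C) :
    Module.rank K ((B.comap C.subtype) ⧸ ((A.comap C.subtype).comap (B.comap C.subtype).subtype))
      = Module.rank K (B ⧸ A.comap B.subtype) := by
  apply LinearEquiv.rank_eq
  refine Submodule.Quotient.equiv _ _ (Submodule.comapSubtypeEquivOfLe hBC) ?_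
  ext x
  simp [Submodule.comapSubtypeEquivOfLe, Submodule.mem_map]
  constructor
  · rintro ⟨a, ha, _, _, rfl⟩
    exact ha
  · intro hx
    exact ⟨x, hx, hBC x.2, by simp, rfl⟩

-- L2: additivity
theorem quotRank_add {A B C : Submodule K V} (hAB : A ≤ B) (hBC : B ≤ C) :
    quotRank A C = quotRank A B + quotRank B C := by
  have h1 := Submodule.rank_quotient_add_rank
    ((B.comap C.subtype).map (A.comap C.subtype).mkQ)
  have h2 := (Submodule.quotientQuotientEquivQuotient (A.comap C.subtype) (B.comap C.subtype)
    (Submodule.comap_mono hAB)).rank_eq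
  have h3 := rank_map_mkQ (A.comap C.subtype) (B.comap C.subtype)
  have h4 := quot_comap_rank_eq A B C hBC
  rw [h2, h3, h4] at h1
  rw [quotRank, ← h1, add_comm]
  rfl

open Cardinal in
private lemma card_cancel_fin {a b : Cardinal} (n : ℕ) (hn : n ≠ 0)
    (h : a + n = b + n) : a = b := by
  by_cases ha : a < ℵ₀
  · by_cases hb : b < ℵ₀
    · obtain ⟨p, rfl⟩ := Cardinal.lt_aleph0.1 ha
      obtain ⟨q, rfl⟩ := Cardinal.lt_aleph0.1 hb
      have : p + n = q + n := by exact_mod_cast h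
      exact_mod_cast (by omega : p = q)
    · exfalso
      push_neg at hb
      have hb' : b + n = b := Cardinal.add_eq_left hb ((Cardinal.nat_lt_aleph0 n).le.trans hb)
      rw [hb'] at h
      exact absurd h.symm.le (not_le.2 ((Cardinal.add_lt_aleph0 ha (Cardinal.nat_lt_aleph0 n)).trans_le hb))
  · push_neg at ha
    have ha' : a + n = a := Cardinal.add_eq_left ha ((Cardinal.nat_lt_aleph0 n).le.trans ha)
    rw [ha'] at h
    have hb : ℵ₀ ≤ b := by
      by_contra hb
      push_neg at hb
      exact absurd h.le (not_le.2 ((Cardinal.add_lt_aleph0 hb (Cardinal.nat_lt_aleph0 n)).trans_le ha))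
    rw [Cardinal.add_eq_left hb ((Cardinal.nat_lt_aleph0 n).le.trans hb)] at h
    exact h

private lemma card_cancel_one {a b : Cardinal} (h : a + 1 = b + 1) : a = b := by
  have := card_cancel_fin (a := a) (b := b) 1 one_ne_zero (by exact_mod_cast h)
  exact this

private lemma card_cancel_one' {a b : Cardinal} (h : 1 + a = 1 + b) : a = b :=
  card_cancel_one (by rw [add_comm 1 a, add_comm 1 b] at h; exact h)

private lemma card_add_eq_one {a b : Cardinal} (h : a + b = 1) : a = 0 ∨ b = 0 := by
  by_contra hc
  push_neg at hc
  have h1 : 1 ≤ a := Cardinal.one_le_iff_ne_zero.2 hc.1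
  have h2 : 1 ≤ b := Cardinal.one_le_iff_ne_zero.2 hc.2
  have : (2 : Cardinal) ≤ 1 := by calc (2:Cardinal) = 1 + 1 := by norm_num
                                       _ ≤ a + b := add_le_add h1 h2
                                       _ = 1 := h
  norm_num at this

private lemma card_add_eq_two {a b : Cardinal} (h : a + b = 2) (ha : a ≠ 0) (hb : b ≠ 0) :
    a = 1 ∧ b = 1 := by
  have hfin : a < Cardinal.aleph0 ∧ b < Cardinal.aleph0 := by
    rw [← Cardinal.add_lt_aleph0_iff, h]; exact Cardinal.nat_lt_aleph0 2
  obtain ⟨p, rfl⟩ := Cardinal.lt_aleph0.1 hfin.1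
  obtain ⟨q, rfl⟩ := Cardinal.lt_aleph0.1 hfin.2
  have hpq : p + q = 2 := by exact_mod_cast h
  have hp : p ≠ 0 := by exact_mod_cast ha
  have hq : q ≠ 0 := by exact_mod_cast hb
  constructor <;> exact_mod_cast (by omega : _)

-- L3: maximality
theorem eq_of_quotRank_one {A B C : Submodule K V} (hAB : A ≤ B) (hBC : B ≤ C)
    (h : quotRank A C = 1) : B = A ∨ B = C := by
  rw [quotRank_add hAB hBC] at h
  rcases card_add_eq_one h with h0 | h0
  · exact Or.inl (le_antisymm (quotRank_eq_zero_iff.1 h0) hAB)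
  · exact Or.inr (le_antisymm hBC (quotRank_eq_zero_iff.1 h0))

theorem quotRank_ne_zero_of_lt {A B : Submodule K V} (h : A < B) : quotRank A B ≠ 0 :=
  fun h0 => absurd (quotRank_eq_zero_iff.1 h0) (fun hle => h.ne (le_antisymm h.le hle))

theorem quotRank_self (A : Submodule K V) : quotRank A A = 0 :=
  quotRank_eq_zero_iff.2 le_rfl

-- pencil elements have quotRanks 1 (given quotRank M N = 2)
theorem quotRank_of_between {M Z N : Submodule K V} (h2 : quotRank M N = 2)
    (h1 : M < Z) (h3 : Z < N) : quotRank M Z = 1 ∧ quotRank Z N = 1 := by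
  have := quotRank_add h1.le h3.le
  rw [h2] at this
  exact card_add_eq_two this.symm (quotRank_ne_zero_of_lt h1) (quotRank_ne_zero_of_lt h3)

-- L9: adding a line
theorem quotRank_sup_span {A : Submodule K V} {u : V} (hu : u ∉ A) :
    quotRank A (A ⊔ K ∙ u) = 1 := by
  set B := A ⊔ (K ∙ u) with hB
  have huB : u ∈ B := (le_sup_right : (K ∙ u) ≤ B) (Submodule.mem_span_singleton_self u)
  have hle : quotRank A B ≤ 1 := by
    have hspan : Submodule.span K {Submodule.Quotient.mk (⟨u, huB⟩ : B)} =
        (⊤ : Submodule K (B ⧸ A.comap B.subtype)) := by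
      rw [eq_top_iff]
      rintro x -
      induction x using Submodule.Quotient.induction_on with
      | H b =>
        obtain ⟨a, ha, c, hc, hbc⟩ := Submodule.mem_sup.1 b.2
        obtain ⟨k, rfl⟩ := Submodule.mem_span_singleton.1 hc
        have : (Submodule.Quotient.mk b : B ⧸ A.comap B.subtype) =
            k • (Submodule.Quotient.mk (⟨u, huB⟩ : B) : B ⧸ A.comap B.subtype) := by
          rw [← Submodule.Quotient.mk_smul, Submodule.Quotient.eq]
          refine Submodule.mem_comap.2 ?_
          simpa [← hbc] using ha
        rw [this]
        exact Submodule.smul_mem _ _ (Submodule.mem_span_singleton_self _)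
    calc quotRank A B = Module.rank K (⊤ : Submodule K (B ⧸ A.comap B.subtype)) :=
          (rank_top K _).symm
      _ = Module.rank K (Submodule.span K {Submodule.Quotient.mk (⟨u, huB⟩ : B)}) := by
          rw [hspan]
      _ ≤ 1 := by simpa using rank_span_le (R := K) {Submodule.Quotient.mk (⟨u, huB⟩ : B)}
  have hne : quotRank A B ≠ 0 := fun h0 =>
    hu (quotRank_eq_zero_iff.1 h0 huB)
  exact le_antisymm hle (Cardinal.one_le_iff_ne_zero.2 hne)

-- L5
theorem rank_eq_add_quotRank {M E : Submodule K V} (h : M ≤ E) :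
    Module.rank K E = Module.rank K M + quotRank M E := by
  have h1 := Submodule.rank_quotient_add_rank (M.comap E.subtype)
  have h2 : Module.rank K (M.comap E.subtype) = Module.rank K M :=
    (Submodule.comapSubtypeEquivOfLe h).rank_eq
  rw [h2] at h1
  rw [← h1, add_comm]
  rfl

-- L6
theorem quotRank_top (X : Submodule K V) : quotRank X ⊤ = Module.rank K (V ⧸ X) := by
  apply LinearEquiv.rank_eq
  refine Submodule.Quotient.equiv _ _ (Submodule.topEquiv) ?_
  ext x
  simp [Submodule.mem_map]

theorem quotRank_bot (X : Submodule K V) : quotRank ⊥ X = Module.rank K X := by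
  apply LinearEquiv.rank_eq
  apply Submodule.quotEquivOfEqBot
  ext x
  simp

theorem rank_V_eq {X : Submodule K V} :
    Module.rank K V = Module.rank K X + quotRank X ⊤ := by
  have := rank_eq_add_quotRank (M := X) (E := ⊤) le_top
  rwa [rank_top] at this

theorem Grass.rank_eq {X : Submodule K V} (hX : X ∈ Grass K V) :
    Module.rank K X = quotRank X ⊤ := by
  obtain ⟨e⟩ := hX
  rw [quotRank_top]
  exact e.rank_eq

-- L7: star transfer
theorem grass_of_star {X M W : Submodule K V} (hX : X ∈ Grass K V)
    (hMX : M ≤ X) (hMW : M ≤ W) (h1 : quotRank M X = 1) (h2 : quotRank M W = 1) :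
    W ∈ Grass K V := by
  have hrk : Module.rank K W = Module.rank K X := by
    rw [rank_eq_add_quotRank hMX, rank_eq_add_quotRank hMW, h1, h2]
  have hX' : X ≤ (⊤ : Submodule K V) := le_top
  have hW' : W ≤ (⊤ : Submodule K V) := le_top
  have hq : quotRank W ⊤ = quotRank X ⊤ := by
    have e1 := quotRank_add hMX hX'
    have e2 := quotRank_add hMW hW'
    rw [h1] at e1; rw [h2] at e2
    exact card_cancel_one' (e2.symm.trans e1)
  have : Module.rank K W = Module.rank K (V ⧸ W) := by
    rw [hrk, Grass.rank_eq hX, ← hq, quotRank_top]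
  exact nonempty_linearEquiv_of_rank_eq this

-- L8: top transfer
theorem grass_of_top {X N W : Submodule K V} (hX : X ∈ Grass K V)
    (hXN : X ≤ N) (hWN : W ≤ N) (h1 : quotRank X N = 1) (h2 : quotRank W N = 1) :
    W ∈ Grass K V := by
  have hrk : Module.rank K W = Module.rank K X := by
    have e1 := rank_eq_add_quotRank hXN
    have e2 := rank_eq_add_quotRank hWN
    rw [h1] at e1; rw [h2] at e2
    exact card_cancel_one (e2.symm.trans e1)
  have hq : quotRank W ⊤ = quotRank X ⊤ := by
    rw [quotRank_add hXN le_top, quotRank_add hWN le_top, h1, h2]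
  have : Module.rank K W = Module.rank K (V ⧸ W) := by
    rw [hrk, Grass.rank_eq hX, ← hq, quotRank_top]
  exact nonempty_linearEquiv_of_rank_eq this

theorem IsPencilPair.quotRank_two {M N : Submodule K V} (h : IsPencilPair M N) :
    quotRank M N = 2 := by
  obtain ⟨X, _, hMX, hXN, h1, h2⟩ := h
  rw [quotRank_add hMX hXN, h1, h2]
  norm_num

theorem IsPencilPair.le {M N : Submodule K V} (h : IsPencilPair M N) : M ≤ N := by
  obtain ⟨X, _, hMX, hXN, _, _⟩ := h
  exact hMX.trans hXN

theorem pencil_mem_quotRank {M N Z : Submodule K V} (h : IsPencilPair M N)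
    (hZ : Z ∈ pencilSet M N) : quotRank M Z = 1 ∧ quotRank Z N = 1 :=
  quotRank_of_between h.quotRank_two hZ.2.1 hZ.2.2

-- Claim B + inf/sup identification
theorem pencil_distinct_adjacent {M N X Y : Submodule K V} (h : IsPencilPair M N)
    (hX : X ∈ pencilSet M N) (hY : Y ∈ pencilSet M N) (hXY : X ≠ Y) :
    Adjacent X Y ∧ X ⊓ Y = M ∧ X ⊔ Y = N := by
  obtain ⟨hX1, hX2⟩ := pencil_mem_quotRank h hX
  obtain ⟨hY1, hY2⟩ := pencil_mem_quotRank h hY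
  have hMle : M ≤ X ⊓ Y := le_inf hX.2.1.le hY.2.1.le
  have hXYne : ¬ X ≤ Y := by
    intro hle
    rcases eq_of_quotRank_one hX.2.1.le hle hY1 with h0 | h0
    · exact absurd h0 hX.2.1.ne'
    · exact hXY h0
  have hinf : X ⊓ Y = M := by
    rcases eq_of_quotRank_one hMle inf_le_left hX1 with h0 | h0
    · exact h0
    · exact absurd (h0 ▸ inf_le_right : X ≤ Y) hXYne
  have hsup : X ⊔ Y = N := by
    rcases eq_of_quotRank_one le_sup_left (sup_le hX.2.2.le hY.2.2.le) hX2 with h0 | h0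
    · exact absurd (h0 ▸ le_sup_right : Y ≤ X) (by
        intro hle
        rcases eq_of_quotRank_one hY.2.1.le hle hX1 with h1 | h1
        · exact hY.2.1.ne' h1
        · exact hXY h1.symm)
    · exact h0
  refine ⟨⟨?_, ?_⟩, hinf, hsup⟩
  · rw [hinf]; exact hX1
  · rw [hinf]; exact hY1

theorem Adjacent.ne {X Y : Submodule K V} (h : Adjacent X Y) : X ≠ Y := by
  intro he
  have : quotRank (X ⊓ Y) X = 0 := by rw [he, inf_idem, quotRank_self]
  rw [h.1] at this
  norm_num at this

-- Claim A
theorem adjacent_pencil {X Y : Submodule K V} (hX : X ∈ Grass K V) (hY : Y ∈ Grass K V)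
    (h : Adjacent X Y) :
    IsPencilPair (X ⊓ Y) (X ⊔ Y) ∧ X ∈ pencilSet (X ⊓ Y) (X ⊔ Y) ∧
      Y ∈ pencilSet (X ⊓ Y) (X ⊔ Y) := by
  have hXN : quotRank X (X ⊔ Y) = 1 := by
    have h2 := quotRank_inf_left Y X
    rw [inf_comm, sup_comm] at h2
    rw [← h2]; exact h.2
  have hYN : quotRank Y (X ⊔ Y) = 1 := by
    rw [← quotRank_inf_left X Y]; exact h.1
  have hMX : X ⊓ Y < X := by
    refine lt_of_le_of_ne inf_le_left ?_
    intro he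
    have h1 := h.1
    rw [he, quotRank_self] at h1
    norm_num at h1
  have hMY : X ⊓ Y < Y := by
    refine lt_of_le_of_ne inf_le_right ?_
    intro he
    have h1 := h.2
    rw [he] at h1
    rw [quotRank_self] at h1
    norm_num at h1
  have hXN' : X < X ⊔ Y := by
    refine lt_of_le_of_ne le_sup_left ?_
    intro he
    rw [← he, quotRank_self] at hXN
    norm_num at hXN
  have hYN' : Y < X ⊔ Y := by
    refine lt_of_le_of_ne le_sup_right ?_
    intro he
    rw [← he, quotRank_self] at hYN
    norm_num at hYN
  exact ⟨⟨X, hX, inf_le_left, le_sup_left, h.1, hXN⟩,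
    ⟨hX, hMX, hXN'⟩, ⟨hY, hMY, hYN'⟩⟩

theorem pencil_two_elements {M N : Submodule K V} (h : IsPencilPair M N) :
    ∃ X Y, X ∈ pencilSet M N ∧ Y ∈ pencilSet M N ∧ X ≠ Y := by
  obtain ⟨X, hXG, hMX, hXN, h1, h2⟩ := h
  have hMXlt : M < X := lt_of_le_of_ne hMX (by
    rintro rfl; rw [quotRank_self] at h1; norm_num at h1)
  have hXNlt : X < N := lt_of_le_of_ne hXN (by
    rintro rfl; rw [quotRank_self] at h2; norm_num at h2)
  have hNX : ¬ N ≤ X := fun hle => by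
    rw [quotRank_eq_zero_iff.2 hle] at h2; norm_num at h2
  obtain ⟨w, hwN, hwX⟩ := SetLike.not_le_iff_exists.1 hNX
  have hwM : w ∉ M := fun hw => hwX (hMX hw)
  set Y := M ⊔ (K ∙ w) with hY
  have hMYq : quotRank M Y = 1 := quotRank_sup_span hwM
  have hMYlt : M < Y := lt_of_le_of_ne le_sup_left (by
    intro he; rw [← he, quotRank_self] at hMYq; norm_num at hMYq)
  have hYN : Y ≤ N := sup_le (hMX.trans hXN) ((Submodule.span_singleton_le_iff_mem _ _).2 hwN)
  have hpair : IsPencilPair M N := ⟨X, hXG, hMX, hXN, h1, h2⟩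
  have hYNlt : Y < N := lt_of_le_of_ne hYN (by
    intro he
    have := hpair.quotRank_two
    rw [← he, hMYq] at this
    norm_num at this)
  have hYG : Y ∈ Grass K V := grass_of_star hXG hMX le_sup_left h1 hMYq
  refine ⟨X, Y, ⟨hXG, hMXlt, hXNlt⟩, ⟨hYG, hMYlt, hYNlt⟩, ?_⟩
  intro he
  exact hwX (he ▸ (le_sup_right : (K ∙ w) ≤ Y) (Submodule.mem_span_singleton_self w))

-- L10: classification of common neighbours
theorem common_neighbor_cases {M N X Y W : Submodule K V} (h : IsPencilPair M N)
    (hX : X ∈ pencilSet M N) (hY : Y ∈ pencilSet M N) (hXY : X ≠ Y)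
    (hWX : Adjacent W X) (hWY : Adjacent W Y) :
    (M ≤ W ∧ quotRank M W = 1) ∨ (W ≤ N ∧ quotRank W N = 1) := by
  obtain ⟨-, hinf, hsup⟩ := pencil_distinct_adjacent h hX hY hXY
  obtain ⟨hX1, hX2⟩ := pencil_mem_quotRank h hX
  by_cases hAB : W ⊓ X = W ⊓ Y
  · left
    have hAM : W ⊓ X ≤ M := by
      rw [← hinf]
      exact le_inf inf_le_right (hAB ▸ inf_le_right)
    have hq := quotRank_add hAM hX.2.1.le
    rw [hWX.2, hX1] at hq
    have h0 : quotRank (W ⊓ X) M = 0 := by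
      have : quotRank (W ⊓ X) M + 1 = 0 + 1 := by rw [zero_add, ← hq]
      exact card_cancel_one this
    have hMA : M ≤ W ⊓ X := quotRank_eq_zero_iff.1 h0
    have hMW : M = W ⊓ X := le_antisymm hMA hAM
    refine ⟨hMA.trans inf_le_left, ?_⟩
    rw [hMW]
    exact hWX.1
  · right
    have hsupAB : (W ⊓ X) ⊔ (W ⊓ Y) = W := by
      rcases eq_of_quotRank_one le_sup_left (sup_le inf_le_left inf_le_left) hWX.1 with h0 | h0
      · exfalso
        have hBA : W ⊓ Y ≤ W ⊓ X := by rw [← h0]; exact le_sup_right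
        rcases eq_of_quotRank_one le_sup_right (sup_le inf_le_left inf_le_left) hWY.1
          with h1 | h1
        · refine hAB (le_antisymm ?_ hBA)
          rw [← h1]; exact le_sup_left
        · have hWX' : W ≤ X := ((h1.symm.trans h0).le).trans inf_le_right
          have h2 := hWX.1
          rw [inf_eq_left.2 hWX', quotRank_self] at h2
          norm_num at h2
      · exact h0
    have hWN : W ≤ N := by
      rw [← hsupAB, ← hsup]
      exact sup_le (inf_le_right.trans le_sup_left) (inf_le_right.trans le_sup_right)
    have hXWN : X ⊔ W = N := by
      rcases eq_of_quotRank_one le_sup_left (sup_le hX.2.2.le hWN) hX2 with h0 | h0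
      · exfalso
        have hWX' : W ≤ X := h0 ▸ le_sup_right
        have : W ⊓ X = W := inf_eq_left.2 hWX'
        have h1 := hWX.1
        rw [this, quotRank_self] at h1
        norm_num at h1
      · exact h0
    have := quotRank_inf_left X W
    rw [hXWN, inf_comm] at this
    exact ⟨hWN, this ▸ hWX.2⟩

theorem star_adjacent {M W Z : Submodule K V} (hMW : M ≤ W) (hMZ : M ≤ Z)
    (h1 : quotRank M W = 1) (h2 : quotRank M Z = 1) (hne : W ≠ Z) : Adjacent W Z := by
  have hinf : W ⊓ Z = M := by
    rcases eq_of_quotRank_one (le_inf hMW hMZ) inf_le_left h1 with h0 | h0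
    · exact h0
    · exfalso
      have hWZ : W ≤ Z := by rw [← h0]; exact inf_le_right
      rcases eq_of_quotRank_one hMW hWZ h2 with h3 | h3
      · rw [h3, quotRank_self] at h1; norm_num at h1
      · exact hne h3
  exact ⟨by rw [hinf]; exact h1, by rw [hinf]; exact h2⟩

theorem top_adjacent {N W Z : Submodule K V} (hWN : W ≤ N) (hZN : Z ≤ N)
    (h1 : quotRank W N = 1) (h2 : quotRank Z N = 1) (hne : W ≠ Z) : Adjacent W Z := by
  have hsup : W ⊔ Z = N := by
    rcases eq_of_quotRank_one le_sup_left (sup_le hWN hZN) h1 with h0 | h0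
    · exfalso
      have hZW : Z ≤ W := by rw [← h0]; exact le_sup_right
      rcases eq_of_quotRank_one hZW hWN h2 with h3 | h3
      · exact hne h3
      · rw [h3, quotRank_self] at h1; norm_num at h1
    · exact h0
  constructor
  · have := quotRank_inf_left W Z
    rw [hsup] at this
    rw [this]
    exact h2
  · have := quotRank_inf_left Z W
    rw [sup_comm, hsup, inf_comm] at this
    rw [this]
    exact h1

theorem pencilPair_M_ne_bot (hV : 2 < Module.rank K V) {M N : Submodule K V}
    (h : IsPencilPair M N) : M ≠ ⊥ := by
  rintro rfl
  obtain ⟨X, hXG, -, -, h1, -⟩ := h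
  rw [quotRank_bot] at h1
  have : Module.rank K V = 2 := by
    rw [rank_V_eq (X := X), ← Grass.rank_eq hXG, h1]
    norm_num
  rw [this] at hV
  exact lt_irrefl _ hV

theorem pencilPair_N_ne_top (hV : 2 < Module.rank K V) {M N : Submodule K V}
    (h : IsPencilPair M N) : N ≠ ⊤ := by
  rintro rfl
  obtain ⟨X, hXG, -, -, -, h2⟩ := h
  have : Module.rank K V = 2 := by
    rw [rank_V_eq (X := X), ← Grass.rank_eq hXG, Grass.rank_eq hXG, h2]
    norm_num
  rw [this] at hV
  exact lt_irrefl _ hV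

theorem exists_compl_span {M : Submodule K V} {m : V} (hm : m ∈ M) (h0 : m ≠ 0) :
    ∃ M' : Submodule K V, M' ≤ M ∧ m ∉ M' ∧ M' ⊔ (K ∙ m) = M := by
  obtain ⟨t, ht⟩ := Submodule.exists_isCompl (K ∙ (⟨m, hm⟩ : M))
  have hmap : (K ∙ (⟨m, hm⟩ : M)).map M.subtype = K ∙ m := by
    rw [Submodule.map_span, Set.image_singleton]
    rfl
  refine ⟨t.map M.subtype, Submodule.map_subtype_le _ _, ?_, ?_⟩
  · rintro hmem
    obtain ⟨x, hx, hxm⟩ := Submodule.mem_map.1 hmem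
    have hx' : x = (⟨m, hm⟩ : M) := Subtype.ext hxm
    rw [hx'] at hx
    have : (⟨m, hm⟩ : M) ∈ (K ∙ (⟨m, hm⟩ : M)) ⊓ t :=
      ⟨Submodule.mem_span_singleton_self _, hx⟩
    rw [ht.inf_eq_bot] at this
    exact h0 (congrArg Subtype.val this)
  · rw [← hmap, ← Submodule.map_sup, sup_comm, ht.sup_eq_top, Submodule.map_subtype_top]

def Pprime (X Y : Submodule K V) : Set (Submodule K V) :=
  {Z ∈ Grass K V | (Z = X ∨ Adjacent Z X) ∧ (Z = Y ∨ Adjacent Z Y) ∧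
    ∀ W ∈ Grass K V, Adjacent W X → Adjacent W Y → (W = Z ∨ Adjacent W Z)}

theorem pencil_subset_Pprime {M N X Y : Submodule K V} (h : IsPencilPair M N)
    (hX : X ∈ pencilSet M N) (hY : Y ∈ pencilSet M N) (hXY : X ≠ Y) :
    pencilSet M N ⊆ Pprime X Y := by
  intro Z hZ
  obtain ⟨hZ1, hZ2⟩ := pencil_mem_quotRank h hZ
  refine ⟨hZ.1, ?_, ?_, ?_⟩
  · by_cases hzx : Z = X
    · exact Or.inl hzx
    · exact Or.inr (pencil_distinct_adjacent h hZ hX hzx).1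
  · by_cases hzy : Z = Y
    · exact Or.inl hzy
    · exact Or.inr (pencil_distinct_adjacent h hZ hY hzy).1
  · intro W hWG hWX hWY
    rcases common_neighbor_cases h hX hY hXY hWX hWY with ⟨hMW, hMWq⟩ | ⟨hWN, hWNq⟩
    · by_cases hWZ : W = Z
      · exact Or.inl hWZ
      · exact Or.inr (star_adjacent hMW hZ.2.1.le hMWq hZ1 hWZ)
    · by_cases hWZ : W = Z
      · exact Or.inl hWZ
      · exact Or.inr (top_adjacent hWN hZ.2.2.le hWNq hZ2 hWZ)

theorem Pprime_subset_pencil (hV : 2 < Module.rank K V) {M N X Y : Submodule K V}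
    (h : IsPencilPair M N) (hX : X ∈ pencilSet M N) (hY : Y ∈ pencilSet M N) (hXY : X ≠ Y) :
    Pprime X Y ⊆ pencilSet M N := by
  intro Z hZmem
  obtain ⟨hZG, hZX, hZY, hc⟩ := hZmem
  obtain ⟨hX1, hX2⟩ := pencil_mem_quotRank h hX
  obtain ⟨hY1, hY2⟩ := pencil_mem_quotRank h hY
  have hMX := hX.2.1.le
  rcases hZX with rfl | hZX
  · exact hX
  rcases hZY with rfl | hZY
  · exact hY
  rcases common_neighbor_cases h hX hY hXY hZX hZY with ⟨hMZ, hMZq⟩ | ⟨hZN, hZNq⟩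
  · -- star case: show Z ≤ N
    by_cases hZN : Z ≤ N
    · refine ⟨hZG, lt_of_le_of_ne hMZ (fun he => by
        rw [← he, quotRank_self] at hMZq; norm_num at hMZq),
        lt_of_le_of_ne hZN (fun he => ?_)⟩
      have h2 := h.quotRank_two
      rw [← he, hMZq] at h2
      norm_num at h2
    · exfalso
      obtain ⟨m, hmM, hm0⟩ := Submodule.exists_mem_ne_zero_of_ne_bot (pencilPair_M_ne_bot hV h)
      obtain ⟨M', hM'le, hmM', hM'sup⟩ := exists_compl_span hmM hm0
      obtain ⟨v, hvX, hvM⟩ := SetLike.exists_of_lt hX.2.1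
      obtain ⟨w, hwN, hwX⟩ := SetLike.exists_of_lt hX.2.2
      set W := (M' ⊔ (K ∙ v)) ⊔ (K ∙ w) with hWdef
      have hMvX : M ⊔ (K ∙ v) = X := by
        rcases eq_of_quotRank_one le_sup_left
          (sup_le hMX ((Submodule.span_singleton_le_iff_mem _ _).2 hvX)) hX1 with h0 | h0
        · exfalso
          have : v ∈ M := by
            rw [← h0]
            exact (le_sup_right : (K ∙ v) ≤ M ⊔ (K ∙ v)) (Submodule.mem_span_singleton_self v)
          exact hvM this
        · exact h0
      have hXwN : X ⊔ (K ∙ w) = N := by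
        rcases eq_of_quotRank_one le_sup_left
          (sup_le hX.2.2.le ((Submodule.span_singleton_le_iff_mem _ _).2 hwN)) hX2 with h0 | h0
        · exfalso
          have : w ∈ X := by
            rw [← h0]
            exact (le_sup_right : (K ∙ w) ≤ X ⊔ (K ∙ w)) (Submodule.mem_span_singleton_self w)
          exact hwX this
        · exact h0
      have hWN : W ≤ N :=
        sup_le (sup_le (hM'le.trans h.le)
            (((Submodule.span_singleton_le_iff_mem _ _).2 hvX).trans hX.2.2.le))
          ((Submodule.span_singleton_le_iff_mem _ _).2 hwN)
      have hWm : W ⊔ (K ∙ m) = N := by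
        refine le_antisymm (sup_le hWN ((Submodule.span_singleton_le_iff_mem _ _).2
          (h.le (hmM)))) ?_
        rw [← hXwN, ← hMvX, ← hM'sup]
        refine sup_le (sup_le (sup_le ?_ ?_) ?_) ?_
        · exact ((le_sup_left : M' ≤ M' ⊔ (K ∙ v)).trans
            (le_sup_left : M' ⊔ (K ∙ v) ≤ W)).trans le_sup_left
        · exact le_sup_right
        · exact ((le_sup_right : (K ∙ v) ≤ M' ⊔ (K ∙ v)).trans
            (le_sup_left : M' ⊔ (K ∙ v) ≤ W)).trans le_sup_left
        · exact (le_sup_right : (K ∙ w) ≤ W).trans le_sup_left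
      have hmW : m ∉ W := by
        intro hmem
        obtain ⟨p, hp, q, hq, hpq⟩ := Submodule.mem_sup.1 hmem
        obtain ⟨a, ha, bv, hbv, hab⟩ := Submodule.mem_sup.1 hp
        obtain ⟨b, rfl⟩ := Submodule.mem_span_singleton.1 hbv
        obtain ⟨c, rfl⟩ := Submodule.mem_span_singleton.1 hq
        have hbvcw : b • v + c • w ∈ M := by
          have he : b • v + c • w = m - a := by rw [← hpq, ← hab]; abel
          rw [he]
          exact sub_mem hmM (hM'le ha)
        have hcz : c = 0 := by
          by_contra hcne
          apply hwX
          have hcw : c • w ∈ X := by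
            have he : c • w = (b • v + c • w) - b • v := by abel
            rw [he]
            exact sub_mem (hMX hbvcw) (Submodule.smul_mem _ _ hvX)
          have := Submodule.smul_mem X c⁻¹ hcw
          rwa [smul_smul, inv_mul_cancel₀ hcne, one_smul] at this
        have hbz : b = 0 := by
          by_contra hbne
          apply hvM
          rw [hcz, zero_smul, add_zero] at hbvcw
          have := Submodule.smul_mem M b⁻¹ hbvcw
          rwa [smul_smul, inv_mul_cancel₀ hbne, one_smul] at this
        apply hmM'
        rw [hbz, zero_smul, add_zero] at hab
        rw [hcz, zero_smul, add_zero] at hpq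
        rw [← hpq, ← hab]
        exact ha
      have hWNq : quotRank W N = 1 := by rw [← hWm]; exact quotRank_sup_span hmW
      have hWG : W ∈ Grass K V := grass_of_top hX.1 hX.2.2.le hWN hX2 hWNq
      have hWX : W ≠ X := fun he => hmW (by rw [he]; exact hMX hmM)
      have hWY : W ≠ Y := fun he => hmW (by rw [he]; exact hY.2.1.le hmM)
      rcases hc W hWG (top_adjacent hWN hX.2.2.le hWNq hX2 hWX)
          (top_adjacent hWN hY.2.2.le hWNq hY2 hWY) with he | hWZ
      · exact hZN (he ▸ hWN)
      · have hNZ : N ⊓ Z = M := by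
          rcases eq_of_quotRank_one (le_inf h.le hMZ) inf_le_right hMZq with h0 | h0
          · exact h0
          · exfalso
            apply hZN
            rw [← h0]
            exact inf_le_left
        have hWZinf : W ⊓ Z = W ⊓ M := by
          rw [← hNZ, ← inf_assoc, inf_eq_left.2 hWN]
        have hWMM : quotRank (W ⊓ M) M ≠ 0 := fun h0 =>
          hmW ((quotRank_eq_zero_iff.1 h0 hmM).1)
        have hq2 := hWZ.2
        rw [hWZinf, quotRank_add (inf_le_right : W ⊓ M ≤ M) hMZ, hMZq] at hq2
        exact hWMM (card_cancel_one (by rw [hq2, zero_add]))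
  · -- top case: show M ≤ Z
    by_cases hMZ : M ≤ Z
    · refine ⟨hZG, lt_of_le_of_ne hMZ (fun he => ?_), lt_of_le_of_ne hZN (fun he => by
        rw [he, quotRank_self] at hZNq; norm_num at hZNq)⟩
      have h2 := h.quotRank_two
      rw [he, hZNq] at h2
      norm_num at h2
    · exfalso
      have hNlt : N < ⊤ := lt_top_iff_ne_top.2 (pencilPair_N_ne_top hV h)
      obtain ⟨u, -, huN⟩ := SetLike.exists_of_lt hNlt
      have huM : u ∉ M := fun hu => huN (h.le hu)
      set W := M ⊔ (K ∙ u) with hWdef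
      have hMWq : quotRank M W = 1 := quotRank_sup_span huM
      have hWG : W ∈ Grass K V := grass_of_star hX.1 hMX le_sup_left hX1 hMWq
      have huW : u ∈ W := (le_sup_right : (K ∙ u) ≤ W) (Submodule.mem_span_singleton_self u)
      have hWX : W ≠ X := fun he => huN (hX.2.2.le (by rw [← he]; exact huW))
      have hWY : W ≠ Y := fun he => huN (hY.2.2.le (by rw [← he]; exact huW))
      rcases hc W hWG (star_adjacent le_sup_left hMX hMWq hX1 hWX)
          (star_adjacent le_sup_left hY.2.1.le hMWq hY1 hWY) with he | hWZ
      · exact huN (hZN (he ▸ huW))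
      · have hZMN : Z ⊔ M = N := by
          rcases eq_of_quotRank_one le_sup_left (sup_le hZN h.le) hZNq with h0 | h0
          · exfalso
            apply hMZ
            rw [← h0]
            exact le_sup_right
          · exact h0
        have hWsup : W ⊔ Z = N ⊔ (K ∙ u) := by
          rw [← hZMN, sup_assoc, sup_comm (K ∙ u) Z, ← sup_assoc, sup_comm M Z]
        have hqZ : quotRank Z (W ⊔ Z) = 2 := by
          rw [hWsup, quotRank_add hZN (le_sup_left : N ≤ N ⊔ (K ∙ u)), hZNq,
            quotRank_sup_span huN]
          norm_num
        have hq1 := hWZ.1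
        rw [quotRank_inf_left W Z, hqZ] at hq1
        norm_num at hq1

theorem Pprime_subset_grass {X Y : Submodule K V} : Pprime X Y ⊆ Grass K V :=
  fun _ hZ => hZ.1

theorem Pprime_image {f : Submodule K V → Submodule K V}
    (hf : Set.BijOn f (Grass K V) (Grass K V))
    (hA : ∀ X ∈ Grass K V, ∀ Y ∈ Grass K V, (Adjacent X Y ↔ Adjacent (f X) (f Y)))
    {X Y : Submodule K V} (hXG : X ∈ Grass K V) (hYG : Y ∈ Grass K V) :
    f '' (Pprime X Y) = Pprime (f X) (f Y) := by
  ext Z'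
  constructor
  · rintro ⟨Z, ⟨hZG, c1, c2, c3⟩, rfl⟩
    refine ⟨hf.mapsTo hZG, ?_, ?_, ?_⟩
    · rcases c1 with he | hadj
      · exact Or.inl (by rw [he])
      · exact Or.inr ((hA Z hZG X hXG).1 hadj)
    · rcases c2 with he | hadj
      · exact Or.inl (by rw [he])
      · exact Or.inr ((hA Z hZG Y hYG).1 hadj)
    · intro W' hW'G hW'X hW'Y
      obtain ⟨W, hWG, rfl⟩ := hf.surjOn hW'G
      rcases c3 W hWG ((hA W hWG X hXG).2 hW'X) ((hA W hWG Y hYG).2 hW'Y) with he | hadj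
      · exact Or.inl (by rw [he])
      · exact Or.inr ((hA W hWG Z hZG).1 hadj)
  · rintro ⟨hZ'G, c1, c2, c3⟩
    obtain ⟨Z, hZG, rfl⟩ := hf.surjOn hZ'G
    refine ⟨Z, ⟨hZG, ?_, ?_, ?_⟩, rfl⟩
    · rcases c1 with he | hadj
      · exact Or.inl (hf.injOn hZG hXG he)
      · exact Or.inr ((hA Z hZG X hXG).2 hadj)
    · rcases c2 with he | hadj
      · exact Or.inl (hf.injOn hZG hYG he)
      · exact Or.inr ((hA Z hZG Y hYG).2 hadj)
    · intro W hWG hWX hWY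
      rcases c3 (f W) (hf.mapsTo hWG) ((hA W hWG X hXG).1 hWX) ((hA W hWG Y hYG).1 hWY)
        with he | hadj
      · exact Or.inl (hf.injOn hWG hZG he)
      · exact Or.inr ((hA W hWG Z hZG).2 hadj)

theorem pencil_image (hV : 2 < Module.rank K V) {f : Submodule K V → Submodule K V}
    (hf : Set.BijOn f (Grass K V) (Grass K V))
    (hA : ∀ X ∈ Grass K V, ∀ Y ∈ Grass K V, (Adjacent X Y ↔ Adjacent (f X) (f Y)))
    {S : Set (Submodule K V)} (hP : IsPencil S) : IsPencil (f '' S) := by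
  obtain ⟨M, N, hpair, rfl⟩ := hP
  obtain ⟨X, Y, hX, hY, hXY⟩ := pencil_two_elements hpair
  have hXG := hX.1
  have hYG := hY.1
  have hadj : Adjacent X Y := (pencil_distinct_adjacent hpair hX hY hXY).1
  have hadj' : Adjacent (f X) (f Y) := (hA X hXG Y hYG).1 hadj
  obtain ⟨hpair', hX', hY'⟩ := adjacent_pencil (hf.mapsTo hXG) (hf.mapsTo hYG) hadj'
  have e1 : pencilSet M N = Pprime X Y :=
    Set.Subset.antisymm (pencil_subset_Pprime hpair hX hY hXY)
      (Pprime_subset_pencil hV hpair hX hY hXY)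
  have e2 : pencilSet (f X ⊓ f Y) (f X ⊔ f Y) = Pprime (f X) (f Y) :=
    Set.Subset.antisymm (pencil_subset_Pprime hpair' hX' hY' hadj'.ne)
      (Pprime_subset_pencil hV hpair' hX' hY' hadj'.ne)
  refine ⟨f X ⊓ f Y, f X ⊔ f Y, hpair', ?_⟩
  rw [e1, e2]
  exact Pprime_image hf hA hXG hYG

theorem aux_grassmann_main (hV : 2 < Module.rank K V)
    (hG : (Grass K V).Nonempty)
    (f : Submodule K V → Submodule K V)
    (hf : Set.BijOn f (Grass K V) (Grass K V)) :
    (∀ X ∈ Grass K V, ∀ Y ∈ Grass K V, (Adjacent X Y ↔ Adjacent (f X) (f Y))) ↔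
    (∀ S : Set (Submodule K V), S ⊆ Grass K V → (IsPencil S ↔ IsPencil (f '' S))) := by
  constructor
  · intro hA S hS
    constructor
    · exact fun hP => pencil_image hV hf hA hP
    · intro hP'
      set g := Function.invFunOn f (Grass K V) with hg
      have hgG : ∀ y ∈ Grass K V, g y ∈ Grass K V := fun y hy =>
        Function.invFunOn_mem (hf.surjOn hy)
      have hfg : ∀ y ∈ Grass K V, f (g y) = y := fun y hy =>
        Function.invFunOn_eq (hf.surjOn hy)
      have hgf : ∀ x ∈ Grass K V, g (f x) = x := fun x hx =>
        hf.injOn (hgG _ (hf.mapsTo hx)) hx (hfg _ (hf.mapsTo hx))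
      have hgBij : Set.BijOn g (Grass K V) (Grass K V) := by
        refine ⟨hgG, fun y1 h1 y2 h2 he => ?_, fun x hx => ⟨f x, hf.mapsTo hx, hgf x hx⟩⟩
        rw [← hfg y1 h1, ← hfg y2 h2, he]
      have hgA : ∀ X ∈ Grass K V, ∀ Y ∈ Grass K V, (Adjacent X Y ↔ Adjacent (g X) (g Y)) := by
        intro X hXG Y hYG
        have := hA (g X) (hgG X hXG) (g Y) (hgG Y hYG)
        rw [hfg X hXG, hfg Y hYG] at this
        exact this.symm
      have him : g '' (f '' S) = S := by
        apply Set.Subset.antisymm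
        · rintro x ⟨y', ⟨y, hy, rfl⟩, rfl⟩
          rw [hgf y (hS hy)]
          exact hy
        · intro x hx
          exact ⟨f x, ⟨x, hx, rfl⟩, hgf x (hS hx)⟩
      have := pencil_image hV hgBij hgA hP'
      rwa [him] at this
  · intro hP X hXG Y hYG
    constructor
    · intro hadj
      obtain ⟨hpair, hXp, hYp⟩ := adjacent_pencil hXG hYG hadj
      have hSsub : pencilSet (X ⊓ Y) (X ⊔ Y) ⊆ Grass K V := fun Z hZ => hZ.1
      have hP' : IsPencil (f '' pencilSet (X ⊓ Y) (X ⊔ Y)) :=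
        (hP _ hSsub).1 ⟨_, _, hpair, rfl⟩
      obtain ⟨M', N', hpair', he⟩ := hP'
      have hfX : f X ∈ pencilSet M' N' := by rw [← he]; exact ⟨X, hXp, rfl⟩
      have hfY : f Y ∈ pencilSet M' N' := by rw [← he]; exact ⟨Y, hYp, rfl⟩
      have hne : f X ≠ f Y := fun h0 => hadj.ne (hf.injOn hXG hYG h0)
      exact (pencil_distinct_adjacent hpair' hfX hfY hne).1
    · intro hadj'
      obtain ⟨hpair', hXp', hYp'⟩ := adjacent_pencil (hf.mapsTo hXG) (hf.mapsTo hYG) hadj'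
      set S := f ⁻¹' (pencilSet (f X ⊓ f Y) (f X ⊔ f Y)) ∩ Grass K V with hSdef
      have hSsub : S ⊆ Grass K V := Set.inter_subset_right
      have himg : f '' S = pencilSet (f X ⊓ f Y) (f X ⊔ f Y) := by
        apply Set.Subset.antisymm
        · rintro z ⟨x, ⟨hx1, _⟩, rfl⟩
          exact hx1
        · intro z hz
          obtain ⟨x, hxG, rfl⟩ := hf.surjOn hz.1
          exact ⟨x, ⟨hz, hxG⟩, rfl⟩
      have hPS : IsPencil S := (hP S hSsub).2 (by rw [himg]; exact ⟨_, _, hpair', rfl⟩)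
      have hXS : X ∈ S := ⟨hXp', hXG⟩
      have hYS : Y ∈ S := ⟨hYp', hYG⟩
      have hne : X ≠ Y := fun h0 => hadj'.ne (by rw [h0])
      obtain ⟨M2, N2, hpair2, hSeq⟩ := hPS
      rw [hSeq] at hXS hYS
      exact (pencil_distinct_adjacent hpair2 hXS hYS hne).1

/-- Corollary 5.1. A bijection of `𝒢` is an automorphism of the
Grassmann graph `(𝒢, ∼)` iff it is a collineation of the Grassmann space
`(𝒢, 𝔓)`, i.e. it and its inverse map pencils onto pencils. -/
theorem grassmannGraph_auto_iff_collineation (hV : 2 < Module.rank K V)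
    (hG : (Grass K V).Nonempty)
    (f : Submodule K V → Submodule K V)
    (hf : Set.BijOn f (Grass K V) (Grass K V)) :
    (∀ X ∈ Grass K V, ∀ Y ∈ Grass K V, (Adjacent X Y ↔ Adjacent (f X) (f Y))) ↔
    (∀ S : Set (Submodule K V), S ⊆ Grass K V → (IsPencil S ↔ IsPencil (f '' S))) := by
  exact aux_grassmann_main hV hG f hf
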